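/- arXiv:1805.12297 — 7 statements merged into one kernel-verified Lean document; each statement's English description precedes it below -/
import Mathlib

section
/- Let Φ be a root system with simple roots S and positive roots Φ⁺, γ ∈ S a cominuscule simple root, and w an element of the Weyl group such that w(α) > 0 for every simple root α ≠ γ. Define R = {α ∈ Φ : α ≥ γ and w(α) > 0}. Then for every α ∈ R and every simple root β with α + β ∈ Φ, we have α + β ∈ R. -/
/-- Roots are written as finitely supported integer vectors in the
basis of simple roots `ι`; a root is positive iff all its coefficients are
nonnegative (and it is nonzero).  `γ` is a cominuscule simple root: every
positive root has coefficient at most `1` at `γ`.  The Weyl group element `w`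
acts linearly on the root lattice and sends every simple root `β ≠ γ` to a
positive root.  Let `R = {α ∈ Φ : α ≥ γ and w(α) > 0}`, where `α ≥ γ` means
`α` is positive with coefficient at least `1` at `γ`.  Then for `α ∈ R` and a
simple root `β`, if `α + β ∈ Φ` then `α + β ∈ R`. -/
theorem stmt1 {ι : Type*} [DecidableEq ι] (Φ : Set (ι →₀ ℤ)) (γ : ι)
    (hcomin : ∀ α ∈ Φ, (∀ i, 0 ≤ α i) → α γ ≤ 1)
    (w : (ι →₀ ℤ) →ₗ[ℤ] (ι →₀ ℤ))
    (hw : ∀ β : ι, β ≠ γ →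
      (∀ i, 0 ≤ (w (Finsupp.single β 1)) i) ∧ w (Finsupp.single β 1) ≠ 0)
    (R : Set (ι →₀ ℤ))
    (hR : R = {α ∈ Φ | (∀ i, 0 ≤ α i) ∧ 1 ≤ α γ ∧ (∀ i, 0 ≤ (w α) i) ∧ w α ≠ 0})
    (α : ι →₀ ℤ) (hα : α ∈ R) (β : ι)
    (hβroot : α + Finsupp.single β 1 ∈ Φ) :
    α + Finsupp.single β 1 ∈ R := by
  subst hR
  obtain ⟨hΦ, hpos, hγ, hwpos, hwne⟩ := hα
  have hβγ : β ≠ γ := by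
    intro h
    subst h
    have hpos' : ∀ i, 0 ≤ (α + Finsupp.single β 1 : ι →₀ ℤ) i := by
      intro i
      simp only [Finsupp.add_apply]
      have := hpos i
      have : (0:ℤ) ≤ Finsupp.single β 1 i := by
        rcases eq_or_ne i β with rfl | h
        · simp
        · simp [Finsupp.single_apply, h.symm]
      omega
    have := hcomin _ hβroot hpos'
    have h2 : (α + Finsupp.single β 1 : ι →₀ ℤ) β = α β + 1 := by
      simp
    omega
  obtain ⟨hwβpos, hwβne⟩ := hw β hβγ
  refine ⟨hβroot, ?_, ?_, ?_, ?_⟩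
  · intro i
    simp only [Finsupp.add_apply]
    have := hpos i
    have : (0:ℤ) ≤ Finsupp.single β 1 i := by
      rcases eq_or_ne i β with rfl | h
      · simp
      · simp [Finsupp.single_apply, h.symm]
    omega
  · have : (α + Finsupp.single β 1 : ι →₀ ℤ) γ = α γ + Finsupp.single β 1 γ := by simp
    have hs : Finsupp.single β 1 γ = (0:ℤ) := by
      simp [Finsupp.single_apply, hβγ]
    omega
  · intro i
    rw [map_add]
    simp only [Finsupp.add_apply]
    have := hwpos i
    have := hwβpos i
    omega
  · rw [map_add]
    intro h
    apply hwne
    ext i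
    have h' := DFunLike.congr_fun h i
    simp only [Finsupp.add_apply, Finsupp.coe_zero, Pi.zero_apply] at h'
    have := hwpos i
    have := hwβpos i
    simp only [Finsupp.coe_zero, Pi.zero_apply]
    omega
end

section
/- Let w be a permutation of {1,...,n} with 0 ≤ k ≤ d ≤ n such that w(1) > w(2) > ⋯ > w(d). Then for all 1 ≤ i ≤ n, m_w(i,k) = max(0, m_w(i,d) - (d - k)), where m_w(i,j) = #{t ≤ j : w(t) ≤ i}. -/
/-- `mw w i j = #{k ≤ j : w(k) ≤ i}` (positions and values are 0-indexed). -/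
def mw {n : ℕ} (w : Equiv.Perm (Fin n)) (i j : ℕ) : ℕ :=
  (Finset.univ.filter (fun k : Fin n => (k : ℕ) < j ∧ ((w k : ℕ)) < i)).card

/-- if `w(1) > w(2) > ⋯ > w(d)` (0-indexed: `w` is strictly
decreasing on the first `d` positions) and `0 ≤ k ≤ d ≤ n`, then for all
`1 ≤ i ≤ n`, `m_w(i,k) = max(0, m_w(i,d) - (d - k))`. -/
theorem stmt3 {n : ℕ} (w : Equiv.Perm (Fin n)) (k d : ℕ)
    (hkd : k ≤ d) (hdn : d ≤ n)
    (hdec : ∀ a b : Fin n, (a : ℕ) < (b : ℕ) → (b : ℕ) < d → (w b : ℕ) < (w a : ℕ)) :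
    ∀ i, 1 ≤ i → i ≤ n →
      (mw w i k : ℤ) = max 0 ((mw w i d : ℤ) - ((d : ℤ) - (k : ℤ))) := by
  intro i _hi1 _hin
  classical
  set S : Finset (Fin n) :=
    Finset.univ.filter (fun t : Fin n => (t : ℕ) < d ∧ (w t : ℕ) < i) with hS
  set Sk : Finset (Fin n) :=
    Finset.univ.filter (fun t : Fin n => (t : ℕ) < k ∧ (w t : ℕ) < i) with hSk
  have hmd : mw w i d = S.card := rfl
  have hmk : mw w i k = Sk.card := rfl
  have memS : ∀ t : Fin n, t ∈ S ↔ (t : ℕ) < d ∧ (w t : ℕ) < i := by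
    intro t; simp [hS]
  have memSk : ∀ t : Fin n, t ∈ Sk ↔ (t : ℕ) < k ∧ (w t : ℕ) < i := by
    intro t; simp [hSk]
  -- monotonicity: S is upward closed within [0, d)
  have mono : ∀ t s : Fin n, t ∈ S → (t : ℕ) ≤ (s : ℕ) → (s : ℕ) < d → s ∈ S := by
    intro t s ht hle hsd
    rw [memS] at ht ⊢
    rcases eq_or_lt_of_le hle with h | h
    · exact ⟨hsd, by
        have : t = s := Fin.ext h
        simpa [this] using ht.2⟩
    · exact ⟨hsd, lt_trans (hdec t s h hsd) ht.2⟩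
  -- S restricted to [0,d) as ℕ values
  have hScoe : ∀ t : Fin n, t ∈ S → (t : ℕ) < d := fun t ht => ((memS t).mp ht).1
  by_cases hcase : S.card ≤ d - k
  · -- then Sk is empty
    have hempty : Sk = ∅ := by
      by_contra h
      obtain ⟨t, ht⟩ := Finset.nonempty_iff_ne_empty.mpr h
      rw [memSk] at ht
      have htS : t ∈ S := (memS t).mpr ⟨lt_of_lt_of_le ht.1 hkd, ht.2⟩
      have hsub : Finset.Ico (t : ℕ) d ⊆ S.image (fun s : Fin n => (s : ℕ)) := by
        intro j hj
        rw [Finset.mem_Ico] at hj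
        refine Finset.mem_image.mpr ⟨⟨j, lt_of_lt_of_le hj.2 hdn⟩, ?_, rfl⟩
        exact mono t ⟨j, lt_of_lt_of_le hj.2 hdn⟩ htS hj.1 hj.2
      have hc := Finset.card_le_card hsub
      rw [Finset.card_image_of_injective S Fin.val_injective, Nat.card_Ico] at hc
      have : t.val < k := ht.1
      omega
    rw [hmd, hmk, hempty]
    simp only [Finset.card_empty, Nat.cast_zero]
    have : (S.card : ℤ) ≤ (d : ℤ) - (k : ℤ) := by
      have : (S.card : ℤ) ≤ ((d - k : ℕ) : ℤ) := Nat.cast_le.mpr hcase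
      omega
    omega
  · push_neg at hcase
    -- there is t0 ∈ S with t0 < k
    have hex : ∃ t0 ∈ S, (t0 : ℕ) < k := by
      by_contra h
      push_neg at h
      have hsub : S.image (fun s : Fin n => (s : ℕ)) ⊆ Finset.Ico k d := by
        intro j hj
        obtain ⟨s, hs, rfl⟩ := Finset.mem_image.mp hj
        exact Finset.mem_Ico.mpr ⟨h s hs, hScoe s hs⟩
      have hc := Finset.card_le_card hsub
      rw [Finset.card_image_of_injective S Fin.val_injective, Nat.card_Ico] at hc
      omega
    obtain ⟨t0, ht0S, ht0k⟩ := hex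
    -- Sk ⊆ S and S \ Sk has card d - k
    have hSkS : Sk ⊆ S := by
      intro t ht
      rw [memSk] at ht
      exact (memS t).mpr ⟨lt_of_lt_of_le ht.1 hkd, ht.2⟩
    have hsdiff : S \ Sk = Finset.filter (fun t : Fin n => k ≤ (t : ℕ)) S := by
      ext t
      simp only [Finset.mem_sdiff, Finset.mem_filter]
      constructor
      · rintro ⟨h1, h3⟩
        refine ⟨h1, ?_⟩
        rcases (memS t).mp h1 with ⟨_, h2⟩
        by_contra hlt
        exact h3 ((memSk t).mpr ⟨by omega, h2⟩)
      · rintro ⟨h1, h3⟩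
        exact ⟨h1, fun hc => by have := ((memSk t).mp hc).1; omega⟩
    have hcard_diff : (S \ Sk).card = d - k := by
      rw [hsdiff]
      have himg : (Finset.filter (fun t : Fin n => k ≤ (t : ℕ)) S).image (fun s : Fin n => (s : ℕ))
          = Finset.Ico k d := by
        ext j
        simp only [Finset.mem_image, Finset.mem_Ico, Finset.mem_filter]
        constructor
        · rintro ⟨s, ⟨hs, hks⟩, rfl⟩
          exact ⟨hks, hScoe s hs⟩
        · rintro ⟨hkj, hjd⟩
          refine ⟨⟨j, lt_of_lt_of_le hjd hdn⟩, ⟨?_, hkj⟩, rfl⟩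
          exact mono t0 ⟨j, lt_of_lt_of_le hjd hdn⟩ ht0S (by simp; omega) hjd
      have := Finset.card_image_of_injective (Finset.filter (fun t : Fin n => k ≤ (t : ℕ)) S)
        Fin.val_injective
      rw [himg, Nat.card_Ico] at this
      omega
    have hcards : Sk.card = S.card - (d - k) := by
      have := Finset.card_sdiff_of_subset hSkS
      have hle := Finset.card_le_card hSkS
      omega
    rw [hmd, hmk, hcards]
    have h1 : d - k ≤ S.card := by omega
    push_cast [Nat.cast_sub h1]
    omega
end

section
/- Let E(n) be an n-dimensional vector space with standard flag (E(i)). Let w ∈ S_n satisfy w(1) > ⋯ > w(d), let 0 ≤ k ≤ d ≤ n, and let U be a k-dimensional subspace with dim(U ∩ E(i)) ≥ m_w(i,d) − (d − k) for all 1 ≤ i ≤ n. Then dim(U ∩ E(i)) ≥ m_w(i,k) for all 1 ≤ i ≤ n. -/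
/-- The standard flag: `stdFlag K n i` is the subspace of `Fin n → K`
spanned by the first `i` standard basis vectors, i.e. vectors supported on
coordinates `< i`. -/
def stdFlag (K : Type*) [Field K] (n i : ℕ) : Submodule K (Fin n → K) where
  carrier := {x | ∀ j : Fin n, i ≤ (j : ℕ) → x j = 0}
  add_mem' := by
    intro a b ha hb j hj
    simp [Pi.add_apply, ha j hj, hb j hj]
  zero_mem' := by intro j hj; rfl
  smul_mem' := by
    intro c a ha j hj
    simp [Pi.smul_apply, ha j hj]

/-- if `w(1) > ⋯ > w(d)` (0-indexed: strictly decreasing on the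
first `d` positions), `0 ≤ k ≤ d ≤ n`, and `U` is a `k`-dimensional subspace
with `dim(U ∩ E(i)) ≥ m_w(i,d) − (d − k)` for all `1 ≤ i ≤ n`, then
`dim(U ∩ E(i)) ≥ m_w(i,k)` for all `1 ≤ i ≤ n`. -/
theorem stmt5 {K : Type*} [Field K] {n : ℕ} (w : Equiv.Perm (Fin n))
    (k d : ℕ) (hkd : k ≤ d) (hdn : d ≤ n)
    (hdec : ∀ a b : Fin n, (a : ℕ) < (b : ℕ) → (b : ℕ) < d → (w b : ℕ) < (w a : ℕ))
    (U : Submodule K (Fin n → K)) (hU : Module.finrank K U = k)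
    (hineq : ∀ i, 1 ≤ i → i ≤ n →
      (mw w i d : ℤ) - ((d : ℤ) - (k : ℤ))
        ≤ (Module.finrank K ↥(U ⊓ stdFlag K n i) : ℤ)) :
    ∀ i, 1 ≤ i → i ≤ n →
      mw w i k ≤ Module.finrank K ↥(U ⊓ stdFlag K n i) := by
  classical
  intro i h1 h2
  by_cases h0 : mw w i k = 0
  · simp [h0]
  · obtain ⟨t0, ht0⟩ := Finset.card_ne_zero.mp h0
    simp only [Finset.mem_filter, Finset.mem_univ, true_and] at ht0
    set A := Finset.univ.filter (fun t : Fin n => (t : ℕ) < k ∧ (w t : ℕ) < i) with hA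
    set B := Finset.univ.filter (fun t : Fin n => k ≤ (t : ℕ) ∧ (t : ℕ) < d) with hB
    have hdisj : Disjoint A B := by
      simp only [Finset.disjoint_left, hA, hB, Finset.mem_filter, Finset.mem_univ, true_and]
      intro t ht hb
      omega
    have hsub : A ∪ B ⊆ Finset.univ.filter (fun t : Fin n => (t : ℕ) < d ∧ (w t : ℕ) < i) := by
      intro t ht
      simp only [Finset.mem_union, hA, hB, Finset.mem_filter, Finset.mem_univ, true_and] at ht ⊢
      rcases ht with ⟨ha, hb⟩ | ⟨ha, hb⟩
      · exact ⟨lt_of_lt_of_le ha hkd, hb⟩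
      · refine ⟨hb, ?_⟩
        have := hdec t0 t (lt_of_lt_of_le ht0.1 ha) hb
        omega
    have hBcard : B.card = d - k := by
      have hEq : B = (Finset.Ico k d).attachFin
          (fun m hm => lt_of_lt_of_le (Finset.mem_Ico.mp hm).2 hdn) := by
        ext t
        simp [hB, Finset.mem_attachFin, Finset.mem_Ico]
      rw [hEq, Finset.card_attachFin, Nat.card_Ico]
    have key : mw w i k + (d - k) ≤ mw w i d := by
      have h3 : (A ∪ B).card ≤ mw w i d := Finset.card_le_card hsub
      rw [Finset.card_union_of_disjoint hdisj, hBcard] at h3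
      exact h3
    have hq := hineq i h1 h2
    omega
end

section
/- Let E(n) be an n-dimensional vector space over an algebraically closed field with standard flag (E(i)), let 0 ≤ k ≤ d ≤ n, let w ∈ S_n satisfy w(k+1) > w(k+2) > ⋯ > w(n), and let U be a d-dimensional subspace of E(n). Then dim(U ∩ E(i)) ≥ m_w(i,d) for all 1 ≤ i ≤ n if and only if dim(U ∩ E(i)) ≥ m_w(i,k) for all 1 ≤ i ≤ n. -/
lemma card_lt (n i : ℕ) (hi : i ≤ n) :
    (Finset.univ.filter (fun j : Fin n => (j : ℕ) < i)).card = i := by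
  have : (Finset.univ.filter (fun j : Fin n => (j : ℕ) < i))
      = (Finset.range i).attachFin (fun m hm => lt_of_lt_of_le (Finset.mem_range.mp hm) hi) := by
    ext j
    simp [Finset.mem_attachFin]
  rw [this, Finset.card_attachFin, Finset.card_range]

lemma card_sub (n i : ℕ) (hi : i ≤ n) :
    Fintype.card {j : Fin n // i ≤ (j : ℕ)} = n - i := by
  rw [Fintype.card_subtype]
  have h2 := card_lt n i hi
  have h3 : (Finset.univ.filter (fun j : Fin n => i ≤ (j : ℕ)))
      = (Finset.univ.filter (fun j : Fin n => ¬ ((j : ℕ) < i))) := by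
    apply Finset.filter_congr; intro j _; simp
  have := Finset.card_filter_add_card_filter_not
    (s := (Finset.univ : Finset (Fin n))) (p := fun j : Fin n => (j : ℕ) < i)
  simp only [Finset.card_univ, Fintype.card_fin] at this
  rw [h3]
  omega

lemma finrank_stdFlag (K : Type*) [Field K] (n i : ℕ) (hi : i ≤ n) :
    Module.finrank K (stdFlag K n i) = i := by
  let f : (Fin n → K) →ₗ[K] ({j : Fin n // i ≤ (j : ℕ)} → K) :=
    LinearMap.funLeft K K Subtype.val
  have hker : LinearMap.ker f = stdFlag K n i := by
    ext x
    constructor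
    · intro hx j hj
      have := congrFun (LinearMap.mem_ker.mp hx) ⟨j, hj⟩
      exact this
    · intro hx
      ext ⟨j, hj⟩
      exact hx j hj
  have hsurj : Function.Surjective f :=
    LinearMap.funLeft_surjective_of_injective K K _ Subtype.val_injective
  have := LinearMap.finrank_range_add_finrank_ker f
  rw [hker, LinearMap.range_eq_top.mpr hsurj] at this
  have h1 : Module.finrank K (⊤ : Submodule K ({j : Fin n // i ≤ (j : ℕ)} → K))
      = n - i := by
    rw [finrank_top, Module.finrank_pi, card_sub n i hi]
  rw [h1, Module.finrank_pi, Fintype.card_fin] at this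
  omega


lemma card_ge (n i : ℕ) (hi : i ≤ n) :
    (Finset.univ.filter (fun j : Fin n => i ≤ (j : ℕ))).card = n - i := by
  have h2 := card_lt n i hi
  have h3 : (Finset.univ.filter (fun j : Fin n => i ≤ (j : ℕ)))
      = (Finset.univ.filter (fun j : Fin n => ¬ ((j : ℕ) < i))) := by
    apply Finset.filter_congr; intro j _; simp
  have := Finset.card_filter_add_card_filter_not
    (s := (Finset.univ : Finset (Fin n))) (p := fun j : Fin n => (j : ℕ) < i)
  simp only [Finset.card_univ, Fintype.card_fin] at this
  rw [h3]; omega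

lemma card_w_lt {n : ℕ} (w : Equiv.Perm (Fin n)) (i : ℕ) (hi : i ≤ n) :
    (Finset.univ.filter (fun t : Fin n => (w t : ℕ) < i)).card = i := by
  have : (Finset.univ.filter (fun t : Fin n => (w t : ℕ) < i))
      = (Finset.univ.filter (fun v : Fin n => (v : ℕ) < i)).map
          w.symm.toEmbedding := by
    ext t
    simp only [Finset.mem_filter, Finset.mem_univ, true_and, Finset.mem_map,
      Equiv.coe_toEmbedding]
    constructor
    · intro h; exact ⟨w t, h, by simp⟩
    · rintro ⟨v, hv, rfl⟩; simpa using hv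
  rw [this, Finset.card_map, card_lt n i hi]

lemma mw_cases {n : ℕ} (w : Equiv.Perm (Fin n)) (k d i : ℕ) (hdn : d ≤ n)
    (hdec : ∀ a b : Fin n, (a : ℕ) < (b : ℕ) → k ≤ (a : ℕ) → (w b : ℕ) < (w a : ℕ))
    (hi : i ≤ n) :
    mw w i d ≤ mw w i k ∨ mw w i d + n ≤ d + i := by
  by_cases h : ∃ t : Fin n, k ≤ (t : ℕ) ∧ (t : ℕ) < d ∧ (w t : ℕ) < i
  · right
    obtain ⟨t0, ht0k, ht0d, ht0i⟩ := h
    set A := Finset.univ.filter (fun t : Fin n => (t : ℕ) < d ∧ (w t : ℕ) < i)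
    set B := Finset.univ.filter (fun t : Fin n => d ≤ (t : ℕ))
    have hBsub : ∀ t ∈ B, (w t : ℕ) < i := by
      intro t ht
      simp only [B, Finset.mem_filter, Finset.mem_univ, true_and] at ht
      exact lt_trans (hdec t0 t (lt_of_lt_of_le ht0d ht) ht0k) ht0i
    have hdisj : Disjoint A B := by
      rw [Finset.disjoint_left]
      intro t htA htB
      simp only [A, B, Finset.mem_filter, Finset.mem_univ, true_and] at htA htB
      omega
    have hsub : A ∪ B ⊆ Finset.univ.filter (fun t : Fin n => (w t : ℕ) < i) := by
      intro t ht
      rcases Finset.mem_union.mp ht with ht | ht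
      · simp only [A, Finset.mem_filter, Finset.mem_univ, true_and] at ht
        simp [ht.2]
      · simp [hBsub t ht]
    have hcard := Finset.card_le_card hsub
    rw [Finset.card_union_of_disjoint hdisj, card_w_lt w i hi] at hcard
    have hB : B.card = n - d := card_ge n d hdn
    have : mw w i d = A.card := rfl
    omega
  · left
    apply Finset.card_le_card
    intro t ht
    simp only [Finset.mem_filter, Finset.mem_univ, true_and] at ht ⊢
    push_neg at h
    refine ⟨?_, ht.2⟩
    by_contra hc
    exact absurd ht.2 (not_lt.mpr (h t (le_of_not_gt hc) ht.1))

/-- over an algebraically closed field, if `0 ≤ k ≤ d ≤ n`,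
`w(k+1) > w(k+2) > ⋯ > w(n)` (0-indexed: strictly decreasing on positions
`≥ k`), and `U` is a `d`-dimensional subspace, then
`dim(U ∩ E(i)) ≥ m_w(i,d)` for all `1 ≤ i ≤ n` iff
`dim(U ∩ E(i)) ≥ m_w(i,k)` for all `1 ≤ i ≤ n`. -/
theorem stmt6 {K : Type*} [Field K] [IsAlgClosed K] {n : ℕ}
    (w : Equiv.Perm (Fin n)) (k d : ℕ) (hkd : k ≤ d) (hdn : d ≤ n)
    (hdec : ∀ a b : Fin n, (a : ℕ) < (b : ℕ) → k ≤ (a : ℕ) → (w b : ℕ) < (w a : ℕ))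
    (U : Submodule K (Fin n → K)) (hU : Module.finrank K U = d) :
    (∀ i, 1 ≤ i → i ≤ n → mw w i d ≤ Module.finrank K ↥(U ⊓ stdFlag K n i)) ↔
    (∀ i, 1 ≤ i → i ≤ n → mw w i k ≤ Module.finrank K ↥(U ⊓ stdFlag K n i)) := by
  constructor
  · intro h i h1 hin
    refine le_trans ?_ (h i h1 hin)
    apply Finset.card_le_card
    intro t ht
    simp only [Finset.mem_filter, Finset.mem_univ, true_and] at ht ⊢
    exact ⟨lt_of_lt_of_le ht.1 hkd, ht.2⟩
  · intro h i h1 hin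
    rcases mw_cases w k d i hdn hdec hin with hc | hc
    · exact le_trans hc (h i h1 hin)
    · have hsup := Submodule.finrank_sup_add_finrank_inf_eq U (stdFlag K n i)
      have hle : Module.finrank K ↥(U ⊔ stdFlag K n i) ≤ n := by
        have := Submodule.finrank_le (U ⊔ stdFlag K n i)
        simpa using this
      rw [hU, finrank_stdFlag K n i hin] at hsup
      omega
end

section
/- Let E(n) be an n-dimensional vector space over an algebraically closed field with standard flag (E(i)). Let 0 ≤ k ≤ d ≤ m ≤ n, let w ∈ S_n, and suppose U ⊂ V ⊂ E(n) are subspaces with dim U = k, dim(U ∩ E(i)) ≥ m_w(i,d) − (d−k) for all i, and dim(V ∩ E(i)) ≥ m_w(i,m) for all i. Then there exists a d-dimensional subspace U' with U ⊂ U' ⊂ V and dim(U' ∩ E(i)) ≥ m_w(i,d) for all 1 ≤ i ≤ n. -/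
lemma stdFlag_mono {K : Type*} [Field K] {n : ℕ} {i i' : ℕ} (h : i ≤ i') :
    stdFlag K n i ≤ stdFlag K n i' := fun x hx j hj => hx j (le_trans h hj)

lemma stdFlag_top {K : Type*} [Field K] (n : ℕ) : stdFlag K n n = ⊤ := by
  ext x
  simp only [Submodule.mem_top, iff_true]
  show ∀ j : Fin n, n ≤ (j : ℕ) → x j = 0
  intro j hj
  exact absurd j.isLt (not_lt.mpr hj)

lemma mw_mono_right {n : ℕ} (w : Equiv.Perm (Fin n)) (i : ℕ) {d m : ℕ} (h : d ≤ m) :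
    mw w i d ≤ mw w i m := by
  apply Finset.card_le_card
  intro x hx
  simp only [Finset.mem_filter, Finset.mem_univ, true_and] at hx ⊢
  exact ⟨lt_of_lt_of_le hx.1 h, hx.2⟩

lemma mw_top {n : ℕ} (w : Equiv.Perm (Fin n)) {m : ℕ} (hmn : m ≤ n) : mw w n m = m := by
  unfold mw
  have h : ∀ x ∈ Finset.range m, x < n := fun x hx =>
    lt_of_lt_of_le (Finset.mem_range.mp hx) hmn
  have : (Finset.univ.filter (fun k : Fin n => (k : ℕ) < m ∧ ((w k : ℕ)) < n))
      = (Finset.range m).attachFin h := by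
    ext k
    simp [Finset.mem_attachFin, (w k).isLt]
  rw [this, Finset.card_attachFin, Finset.card_range]

open Module Submodule in
lemma stmt7_aux {K : Type*} [Field K] {n : ℕ}
    (w : Equiv.Perm (Fin n)) (d m : ℕ) (hdm : d ≤ m) (hmn : m ≤ n)
    (V : Submodule K (Fin n → K))
    (hVin : ∀ i, 1 ≤ i → i ≤ n →
      mw w i m ≤ Module.finrank K ↥(V ⊓ stdFlag K n i)) :
    ∀ (c k : ℕ) (U : Submodule K (Fin n → K)), k + c = d → U ≤ V →
      Module.finrank K U = k →
      (∀ i, 1 ≤ i → i ≤ n →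
        (mw w i d : ℤ) - (c : ℤ) ≤ (Module.finrank K ↥(U ⊓ stdFlag K n i) : ℤ)) →
      ∃ U' : Submodule K (Fin n → K),
        Module.finrank K U' = d ∧ U ≤ U' ∧ U' ≤ V ∧
        ∀ i, 1 ≤ i → i ≤ n →
          mw w i d ≤ Module.finrank K ↥(U' ⊓ stdFlag K n i) := by
  intro c
  induction c with
  | zero =>
    intro k U hk hUV hU hUin
    refine ⟨U, by rw [hU]; omega, le_rfl, hUV, fun i h1 h2 => ?_⟩
    have := hUin i h1 h2
    omega
  | succ c ih =>
    intro k U hk hUV hU hUin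
    have hn1 : 1 ≤ n := by omega
    -- find the pivot index i₀
    obtain ⟨i₀, hi1, hi2, ha, hb⟩ :
        ∃ i₀, 1 ≤ i₀ ∧ i₀ ≤ n ∧
          Module.finrank K ↥(U ⊓ stdFlag K n i₀) < Module.finrank K ↥(V ⊓ stdFlag K n i₀) ∧
          ∀ i, 1 ≤ i → i ≤ n → i < i₀ →
            (mw w i d : ℤ) - (c : ℤ) ≤ (Module.finrank K ↥(U ⊓ stdFlag K n i) : ℤ) := by
      set S := (Finset.Icc 1 n).filter
        (fun i => (Module.finrank K ↥(U ⊓ stdFlag K n i) : ℤ) < (mw w i d : ℤ) - (c : ℤ))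
        with hSdef
      by_cases hS : S.Nonempty
      · refine ⟨S.min' hS, ?_, ?_, ?_, ?_⟩
        · have := Finset.mem_filter.mp (S.min'_mem hS)
          exact (Finset.mem_Icc.mp this.1).1
        · have := Finset.mem_filter.mp (S.min'_mem hS)
          exact (Finset.mem_Icc.mp this.1).2
        · have hmem' := Finset.mem_filter.mp (S.min'_mem hS)
          have hmem : (1 ≤ S.min' hS ∧ S.min' hS ≤ n) ∧
              (Module.finrank K ↥(U ⊓ stdFlag K n (S.min' hS)) : ℤ)
                < (mw w (S.min' hS) d : ℤ) - (c : ℤ) :=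
            ⟨Finset.mem_Icc.mp hmem'.1, hmem'.2⟩
          have hV := hVin (S.min' hS) hmem.1.1 hmem.1.2
          have hmm : mw w (S.min' hS) d ≤ mw w (S.min' hS) m := mw_mono_right w _ hdm
          have := hmem.2
          omega
        · intro i h1 h2 hlt
          by_contra hcon
          push_neg at hcon
          have : i ∈ S := by
            rw [hSdef, Finset.mem_filter, Finset.mem_Icc]
            exact ⟨⟨h1, h2⟩, hcon⟩
          exact absurd (S.min'_le i this) (not_le.mpr hlt)
      · refine ⟨n, hn1, le_rfl, ?_, ?_⟩
        · have hV := hVin n hn1 le_rfl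
          rw [mw_top w hmn] at hV
          have hT : stdFlag K n n = (⊤ : Submodule K (Fin n → K)) := stdFlag_top n
          rw [hT, inf_top_eq] at hV
          rw [hT, inf_top_eq, inf_top_eq, hU]
          omega
        · intro i h1 h2 _
          by_contra hcon
          push_neg at hcon
          exact hS ⟨i, by rw [hSdef, Finset.mem_filter, Finset.mem_Icc]; exact ⟨⟨h1, h2⟩, hcon⟩⟩
    -- pick a vector v ∈ (V ⊓ E i₀) \ U
    have hle : U ⊓ stdFlag K n i₀ ≤ V ⊓ stdFlag K n i₀ := inf_le_inf_right _ hUV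
    have hlt : U ⊓ stdFlag K n i₀ < V ⊓ stdFlag K n i₀ :=
      hle.lt_of_ne (fun h => by rw [h] at ha; exact lt_irrefl _ ha)
    obtain ⟨v, hvVE, hvUE⟩ := SetLike.exists_of_lt hlt
    have hvE : v ∈ stdFlag K n i₀ := hvVE.2
    have hvV : v ∈ V := hvVE.1
    have hvU : v ∉ U := fun h => hvUE ⟨h, hvE⟩
    have hv0 : v ≠ 0 := fun h => hvU (h ▸ U.zero_mem)
    set U₁ := U ⊔ Submodule.span K {v} with hU₁def
    have hvU₁ : v ∈ U₁ := Submodule.mem_sup_right (Submodule.mem_span_singleton_self v)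
    have hUU₁ : U < U₁ := lt_of_le_of_ne le_sup_left (fun h => hvU (by rw [h]; exact hvU₁))
    have hr1 : Module.finrank K ↥U₁ ≤ k + 1 := by
      have heq := Submodule.finrank_sup_add_finrank_inf_eq U (Submodule.span K {v})
      rw [← hU₁def] at heq
      have hsp : Module.finrank K ↥(Submodule.span K {v}) = 1 := finrank_span_singleton hv0
      omega
    have hr2 : k < Module.finrank K ↥U₁ := hU ▸ Submodule.finrank_lt_finrank_of_lt hUU₁
    have hU₁rank : Module.finrank K ↥U₁ = k + 1 := le_antisymm hr1 hr2
    have hU₁V : U₁ ≤ V :=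
      sup_le hUV (Submodule.span_le.mpr (Set.singleton_subset_iff.mpr hvV))
    obtain ⟨U', h1', h2', h3', h4'⟩ := ih (k + 1) U₁ (by omega) hU₁V hU₁rank (by
      intro i h1 h2
      by_cases hi : i < i₀
      · have hbi := hb i h1 h2 hi
        have hmono : Module.finrank K ↥(U ⊓ stdFlag K n i)
            ≤ Module.finrank K ↥(U₁ ⊓ stdFlag K n i) :=
          Submodule.finrank_mono (inf_le_inf_right _ le_sup_left)
        omega
      · push_neg at hi
        have hvEi : v ∈ stdFlag K n i := stdFlag_mono hi hvE
        have hWle : (U ⊓ stdFlag K n i) ⊔ Submodule.span K {v} ≤ U₁ ⊓ stdFlag K n i := by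
          apply sup_le
          · exact inf_le_inf_right _ le_sup_left
          · rw [Submodule.span_le, Set.singleton_subset_iff]
            exact ⟨hvU₁, hvEi⟩
        have hlt2 : (U ⊓ stdFlag K n i) < (U ⊓ stdFlag K n i) ⊔ Submodule.span K {v} := by
          refine lt_of_le_of_ne le_sup_left (fun h => hvU ?_)
          have : v ∈ (U ⊓ stdFlag K n i) ⊔ Submodule.span K {v} :=
            Submodule.mem_sup_right (Submodule.mem_span_singleton_self v)
          rw [← h] at this
          exact this.1
        have hstep : Module.finrank K ↥(U ⊓ stdFlag K n i)
            < Module.finrank K ↥((U ⊓ stdFlag K n i) ⊔ Submodule.span K {v}) :=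
          Submodule.finrank_lt_finrank_of_lt hlt2
        have hmono : Module.finrank K ↥((U ⊓ stdFlag K n i) ⊔ Submodule.span K {v})
            ≤ Module.finrank K ↥(U₁ ⊓ stdFlag K n i) := Submodule.finrank_mono hWle
        have hUi := hUin i h1 h2
        push_cast at hUi ⊢
        omega)
    exact ⟨U', h1', le_trans le_sup_left h2', h3', h4'⟩

/-- over an algebraically closed field, given `0 ≤ k ≤ d ≤ m ≤ n`,
`w ∈ S_n`, and subspaces `U ⊆ V` with `dim U = k`,
`dim(U ∩ E(i)) ≥ m_w(i,d) − (d−k)` and `dim(V ∩ E(i)) ≥ m_w(i,m)` for all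
`1 ≤ i ≤ n`, there is a `d`-dimensional subspace `U'` with `U ⊆ U' ⊆ V` and
`dim(U' ∩ E(i)) ≥ m_w(i,d)` for all `1 ≤ i ≤ n`. -/
theorem stmt7 {K : Type*} [Field K] [IsAlgClosed K] {n : ℕ}
    (w : Equiv.Perm (Fin n)) (k d m : ℕ)
    (hkd : k ≤ d) (hdm : d ≤ m) (hmn : m ≤ n)
    (U V : Submodule K (Fin n → K)) (hUV : U ≤ V)
    (hU : Module.finrank K U = k)
    (hUin : ∀ i, 1 ≤ i → i ≤ n →
      (mw w i d : ℤ) - ((d : ℤ) - (k : ℤ))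
        ≤ (Module.finrank K ↥(U ⊓ stdFlag K n i) : ℤ))
    (hVin : ∀ i, 1 ≤ i → i ≤ n →
      mw w i m ≤ Module.finrank K ↥(V ⊓ stdFlag K n i)) :
    ∃ U' : Submodule K (Fin n → K),
      Module.finrank K U' = d ∧ U ≤ U' ∧ U' ≤ V ∧
      ∀ i, 1 ≤ i → i ≤ n →
        mw w i d ≤ Module.finrank K ↥(U' ⊓ stdFlag K n i) := by
  apply stmt7_aux w d m hdm hmn V hVin (d - k) k U (by omega) hUV hU
  intro i h1 h2
  have := hUin i h1 h2
  omega
end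

section
/- Let E(n) be an n-dimensional vector space over a field with standard flag E(1) ⊂ ⋯ ⊂ E(n), and let x : E(n) → E(n) be a linear map. Fix integers 0 = t_0 < t_1 < ⋯ < t_l ≤ n and subspaces F_0 ⊂ F_1 ⊂ ⋯ ⊂ F_{2l+1} = E(n) with the properties: F_i ⊆ E(t_i) for 1 ≤ i ≤ l, dim F_{i−1} ≤ r_{i−1}, dim(F_{i−1} ∩ E(t_j)) ≥ min(r_{i−1}, r_j) for all j, and x F_{i+l} ⊆ F_{i−1} for all 1 ≤ i ≤ l+1, where r_1 ≤ ⋯ ≤ r_l are given integers with dim F_i = r_i for i ≤ l. Then for all 1 ≤ j < i ≤ l: dim(x E(t_i) mod E(t_j)) ≤ r_{i−1} − r_j, where x E(t_i) mod E(t_j) denotes the image of x E(t_i) in E(n)/E(t_j). -/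
/-- 'row' inequality of Proposition eqrc: given the chain
`F_0 ⊆ ⋯ ⊆ F_{2l+1} = E(n)` with `F_i ⊆ E(t_i)` and `E(t_i) ⊆ F_{i+l}` for
`1 ≤ i ≤ l`, `dim F_i = r_i` for `i ≤ l`, the Schubert-type intersection
bounds `dim(F_{i−1} ∩ E(t_j)) ≥ min(r_{i−1}, r_j)`, and `x F_{i+l} ⊆ F_{i−1}`
for `1 ≤ i ≤ l+1`, one has for all `1 ≤ j < i ≤ l`:
`dim((x E(t_i) + E(t_j))/E(t_j)) ≤ r_{i−1} − r_j`. -/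
theorem stmt12 {K : Type*} [Field K] {n l : ℕ} (t r : ℕ → ℕ)
    (x : (Fin n → K) →ₗ[K] (Fin n → K))
    (F : ℕ → Submodule K (Fin n → K))
    (ht0 : t 0 = 0)
    (htmono : ∀ i j, i < j → j ≤ l → t i < t j)
    (htn : t l ≤ n)
    (hchain : ∀ i j, i ≤ j → j ≤ 2 * l + 1 → F i ≤ F j)
    (htop : F (2 * l + 1) = ⊤)
    (hFE : ∀ i, 1 ≤ i → i ≤ l → F i ≤ stdFlag K n (t i))
    (hEF : ∀ i, 1 ≤ i → i ≤ l → stdFlag K n (t i) ≤ F (i + l))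
    (hdimF : ∀ i, i ≤ l → Module.finrank K (F i) = r i)
    (hrmono : ∀ i j, i ≤ j → j ≤ l → r i ≤ r j)
    (hint : ∀ i j, 1 ≤ i → i ≤ l + 1 → 1 ≤ j → j ≤ l →
      min (r (i - 1)) (r j) ≤ Module.finrank K ↥(F (i - 1) ⊓ stdFlag K n (t j)))
    (hx : ∀ i, 1 ≤ i → i ≤ l + 1 → Submodule.map x (F (i + l)) ≤ F (i - 1)) :
    ∀ i j, 1 ≤ j → j < i → i ≤ l →
      (Module.finrank K ↥(Submodule.map (stdFlag K n (t j)).mkQ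
          (Submodule.map x (stdFlag K n (t i)))) : ℤ)
        ≤ (r (i - 1) : ℤ) - (r j : ℤ) := by
  intro i j hj hji hil
  have hi1 : 1 ≤ i := le_of_lt (lt_of_le_of_lt hj hji)
  have hjl : j ≤ l := le_trans hji.le hil
  -- x E(t_i) ⊆ F (i-1)
  have h1 : Submodule.map x (stdFlag K n (t i)) ≤ F (i - 1) := by
    refine le_trans (Submodule.map_mono (hEF i hi1 hil)) (hx i hi1 (by omega))
  set p := F (i - 1) with hp
  set q := stdFlag K n (t j) with hq
  have hmono : Submodule.map q.mkQ (Submodule.map x (stdFlag K n (t i))) ≤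
      Submodule.map q.mkQ p := Submodule.map_mono h1
  have hle1 : Module.finrank K ↥(Submodule.map q.mkQ (Submodule.map x (stdFlag K n (t i)))) ≤
      Module.finrank K ↥(Submodule.map q.mkQ p) := Submodule.finrank_mono hmono
  -- rank-nullity for mkQ restricted to p
  have hrn := LinearMap.finrank_range_add_finrank_ker (q.mkQ.comp p.subtype)
  have hrange : LinearMap.range (q.mkQ.comp p.subtype) = Submodule.map q.mkQ p := by
    rw [LinearMap.range_comp, Submodule.range_subtype]
  have hker : LinearMap.ker (q.mkQ.comp p.subtype) = Submodule.comap p.subtype q := by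
    rw [LinearMap.ker_comp, Submodule.ker_mkQ]
  have hkerrank : Module.finrank K ↥(Submodule.comap p.subtype q) =
      Module.finrank K ↥(p ⊓ q) := by
    rw [← Submodule.map_comap_subtype, Submodule.finrank_map_subtype_eq]
  rw [hrange, hker, hkerrank] at hrn
  have hdim1 : Module.finrank K ↥p = r (i - 1) := hdimF (i - 1) (by omega)
  have hrji : r j ≤ r (i - 1) := hrmono j (i - 1) (by omega) (by omega)
  have hintr : min (r (i - 1)) (r j) ≤ Module.finrank K ↥(p ⊓ q) :=
    hint i j hi1 (by omega) hj hjl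
  have hmin : min (r (i - 1)) (r j) = r j := min_eq_right hrji
  rw [hdim1] at hrn
  rw [hmin] at hintr
  omega
end

section
/- Let E(n) be an n-dimensional vector space with standard flag (E(i)), let x : E(n) → E(n) be linear with x² = 0, and let 0 = t_0 < t_1 < ⋯ < t_l < t_{l+1} = n with integers 0 = r_0 ≤ r_1 ≤ ⋯ ≤ r_l = d satisfying: dim((x E(t_i) + E(t_j))/E(t_j)) ≤ r_{i−1} − r_j for all 0 ≤ j < i ≤ l+1. Suppose further V is a d-dimensional subspace with im x ⊆ V ⊆ ker x and dim(V ∩ E(t_j)) ≥ r_j for all j. Then there exists a chain of subspaces V_0 ⊆ V_1 ⊆ ⋯ ⊆ V_l = V with dim V_i = r_i, x E(t_{i+1}) ⊆ V_i ⊆ E(t_i), and dim(V_i ∩ E(t_j)) ≥ min(r_i, r_j) for all 1 ≤ i, j ≤ l. -/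
open Module Submodule

section Aux
variable {K V : Type*} [Field K] [AddCommGroup V] [Module K V] [FiniteDimensional K V]

/-- intermediate submodule of any dimension between -/
lemma exists_between_aux {F : Submodule K V} :
    ∀ k (S : Submodule K V), S ≤ F → ∀ m, finrank K S + k = m → m ≤ finrank K F →
    ∃ W, S ≤ W ∧ W ≤ F ∧ finrank K W = m := by
  intro k
  induction k with
  | zero => intro S hSF m hm _; exact ⟨S, le_rfl, hSF, by omega⟩
  | succ k ih =>
    intro S hSF m hm hmF
    have hlt : finrank K S < finrank K F := by omega
    have hns : ¬ F ≤ S := fun h => absurd (Submodule.finrank_mono h) (by omega)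
    obtain ⟨v, hvF, hvS⟩ := SetLike.exists_of_lt (lt_of_le_of_ne hSF (fun h => hns h.ge))
    have hv0 : v ≠ 0 := fun h => hvS (h ▸ S.zero_mem)
    have hinf : S ⊓ (K ∙ v) = ⊥ := by
      rw [eq_bot_iff]
      rintro w ⟨hwS, hwv⟩
      obtain ⟨c, rfl⟩ := Submodule.mem_span_singleton.1 hwv
      rcases eq_or_ne c 0 with rfl | hc
      · simp
      · exact absurd (by simpa [smul_smul, inv_mul_cancel₀ hc] using S.smul_mem c⁻¹ hwS) hvS
    have hd : finrank K ↥(S ⊔ (K ∙ v)) = finrank K S + 1 := by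
      have := Submodule.finrank_sup_add_finrank_inf_eq S (K ∙ v)
      rw [hinf, finrank_bot, finrank_span_singleton hv0] at this
      omega
    refine (ih (S ⊔ (K ∙ v)) (sup_le hSF (Submodule.span_le.2 (by simpa using hvF))) m
      (by omega) hmF).imp ?_
    rintro W ⟨h1, h2, h3⟩
    exact ⟨le_sup_left.trans h1, h2, h3⟩

lemma exists_between_finrank {S F : Submodule K V} (hSF : S ≤ F) {m : ℕ}
    (h1 : finrank K S ≤ m) (h2 : m ≤ finrank K F) :
    ∃ W, S ≤ W ∧ W ≤ F ∧ finrank K W = m := by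
  obtain ⟨k, hk⟩ := Nat.le.dest h1
  exact exists_between_aux k S hSF m hk h2

lemma finrank_map_mkQ_add (p W : Submodule K V) :
    finrank K ↥(Submodule.map p.mkQ W) + finrank K ↥(p ⊓ W) = finrank K W := by
  have h := LinearMap.finrank_range_add_finrank_ker (p.mkQ.comp W.subtype)
  rw [LinearMap.range_comp, Submodule.range_subtype, LinearMap.ker_comp, Submodule.ker_mkQ] at h
  have e1 : Submodule.comap W.subtype p = Submodule.comap W.subtype (p ⊓ W) := by
    rw [Submodule.comap_inf, Submodule.comap_subtype_self, inf_top_eq]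
  rw [e1, LinearEquiv.finrank_eq (Submodule.comapSubtypeEquivOfLe (inf_le_right : p ⊓ W ≤ W))] at h
  exact h

theorem chain_aux (l : ℕ) (r : ℕ → ℕ) (E : ℕ → Submodule K V) (x : V →ₗ[K] V)
    (hE0 : E 0 = ⊥) (hEtop : E (l+1) = ⊤)
    (hEmono : ∀ i j, i ≤ j → j ≤ l+1 → E i ≤ E j)
    (hr0 : r 0 = 0)
    (hrow : ∀ j i, j < i → i ≤ l + 1 →
      (finrank K ↥(Submodule.map (E j).mkQ (Submodule.map x (E i))) : ℤ)
        ≤ (r (i-1) : ℤ) - (r j : ℤ))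
    (V' : Submodule K V) (hV : finrank K V' = r l)
    (hrange : LinearMap.range x ≤ V')
    (hVE : ∀ j, j ≤ l → r j ≤ finrank K ↥(V' ⊓ E j)) :
    ∃ Vc : ℕ → Submodule K V, (∀ i, i < l → Vc i ≤ Vc (i+1)) ∧ Vc l = V' ∧
      (∀ i, i ≤ l → finrank K (Vc i) = r i ∧ Submodule.map x (E (i+1)) ≤ Vc i ∧ Vc i ≤ E i) ∧
      (∀ i j, j ≤ i → i ≤ l → r j ≤ finrank K ↥(Vc i ⊓ E j)) := by
  classical
  -- row inequality in ℕ form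
  have hrowN : ∀ k i, k < i → i ≤ l + 1 →
      finrank K ↥(Submodule.map x (E i)) + r k
        ≤ r (i-1) + finrank K ↥(Submodule.map x (E i) ⊓ E k) := by
    intro k i hki hil
    have h1 := hrow k i hki hil
    have h2 := finrank_map_mkQ_add (E k) (Submodule.map x (E i))
    rw [inf_comm] at h2
    omega
  -- x E(t_{i+1}) ⊆ E(t_i)
  have hxE : ∀ i, i ≤ l → Submodule.map x (E (i+1)) ≤ E i := by
    intro i hil
    have h1 := hrow i (i+1) (Nat.lt_succ_self i) (by omega)
    rw [Nat.add_sub_cancel] at h1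
    have h0 : finrank K ↥(Submodule.map (E i).mkQ (Submodule.map x (E (i+1)))) = 0 := by omega
    have hb : Submodule.map (E i).mkQ (Submodule.map x (E (i+1))) = ⊥ :=
      Submodule.finrank_eq_zero.1 h0
    have h2 := Submodule.map_le_iff_le_comap.1 hb.le
    rwa [Submodule.comap_bot, Submodule.ker_mkQ] at h2
  -- the one-step refinement
  have step : ∀ i, i < l → ∀ W : Submodule K V,
      finrank K W = r (i+1) → Submodule.map x (E (i+1+1)) ≤ W → W ≤ E (i+1) →
      (∀ j, j ≤ i+1 → r j ≤ finrank K ↥(W ⊓ E j)) →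
      ∃ W', W' ≤ W ∧ finrank K W' = r i ∧ Submodule.map x (E (i+1)) ≤ W' ∧ W' ≤ E i ∧
        ∀ j, j ≤ i → r j ≤ finrank K ↥(W' ⊓ E j) := by
    intro i hil W hWd hWx hWE hWint
    have hUW : Submodule.map x (E (i+1)) ≤ W :=
      le_trans (Submodule.map_mono (hEmono (i+1) (i+1+1) (by omega) (by omega))) hWx
    have hUE : Submodule.map x (E (i+1)) ≤ E i := hxE i hil.le
    have inner : ∀ j, j ≤ i → ∃ Wj : Submodule K V,
        Submodule.map x (E (i+1)) ⊓ E j ≤ Wj ∧ Wj ≤ W ⊓ E j ∧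
        (∀ k, k ≤ j → r k ≤ finrank K ↥(Wj ⊓ E k)) ∧
        ∃ k, k ≤ j ∧ finrank K Wj + finrank K ↥(Submodule.map x (E (i+1)) ⊓ E k)
          ≤ r k + finrank K ↥(Submodule.map x (E (i+1)) ⊓ E j) := by
      intro j
      induction j with
      | zero =>
        intro _
        refine ⟨⊥, ?_, bot_le, ?_, 0, le_rfl, by simp [hr0]⟩
        · rw [hE0]; exact inf_le_right
        · intro k hk
          have hk0 : k = 0 := Nat.le_zero.1 hk
          subst hk0
          rw [hr0]
          exact Nat.zero_le _
      | succ j ih =>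
        intro hj1
        obtain ⟨Wj, ha, hb, hc, k, hkj, hdk⟩ := ih (by omega)
        have hWjE : Wj ≤ E j := hb.trans inf_le_right
        have hinf1 : Wj ⊓ (Submodule.map x (E (i+1)) ⊓ E (j+1))
            = Submodule.map x (E (i+1)) ⊓ E j := by
          apply le_antisymm
          · exact le_inf (inf_le_right.trans inf_le_left) (inf_le_left.trans hWjE)
          · exact le_inf ha
              (le_inf inf_le_left (inf_le_right.trans (hEmono j (j+1) (by omega) (by omega))))
        have hsd := Submodule.finrank_sup_add_finrank_inf_eq Wj
          (Submodule.map x (E (i+1)) ⊓ E (j+1))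
        rw [hinf1] at hsd
        have hinf2 : (W ⊓ E k) ⊓ (Submodule.map x (E (i+1)) ⊓ E (j+1))
            = Submodule.map x (E (i+1)) ⊓ E k := by
          apply le_antisymm
          · exact le_inf (inf_le_right.trans inf_le_left) (inf_le_left.trans inf_le_right)
          · exact le_inf (le_inf (inf_le_left.trans hUW) inf_le_right)
              (le_inf inf_le_left (inf_le_right.trans (hEmono k (j+1) (by omega) (by omega))))
        have hsd2 := Submodule.finrank_sup_add_finrank_inf_eq (W ⊓ E k)
          (Submodule.map x (E (i+1)) ⊓ E (j+1))
        rw [hinf2] at hsd2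
        have hTF : finrank K ↥((W ⊓ E k) ⊔ (Submodule.map x (E (i+1)) ⊓ E (j+1)))
            ≤ finrank K ↥(W ⊓ E (j+1)) :=
          Submodule.finrank_mono (sup_le
            (inf_le_inf_left _ (hEmono k (j+1) (by omega) (by omega)))
            (inf_le_inf_right _ hUW))
        have hWk : r k ≤ finrank K ↥(W ⊓ E k) := hWint k (by omega)
        have hSle : Wj ⊔ (Submodule.map x (E (i+1)) ⊓ E (j+1)) ≤ W ⊓ E (j+1) :=
          sup_le (hb.trans (inf_le_inf_left _ (hEmono j (j+1) (by omega) (by omega))))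
            (inf_le_inf_right _ hUW)
        have hSdim1 : finrank K ↥(Wj ⊔ (Submodule.map x (E (i+1)) ⊓ E (j+1)))
            ≤ finrank K ↥(W ⊓ E (j+1)) := by omega
        have hSdim2 : finrank K ↥(Wj ⊔ (Submodule.map x (E (i+1)) ⊓ E (j+1)))
            + finrank K ↥(Submodule.map x (E (i+1)) ⊓ E k)
            ≤ r k + finrank K ↥(Submodule.map x (E (i+1)) ⊓ E (j+1)) := by omega
        have hrj1F : r (j+1) ≤ finrank K ↥(W ⊓ E (j+1)) := hWint (j+1) (by omega)
        obtain ⟨W', hS'W', hW'F, hW'dim⟩ := exists_between_finrank hSle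
          (le_max_left _ (r (j+1))) (max_le hSdim1 hrj1F)
        refine ⟨W', le_trans le_sup_right hS'W', hW'F, ?_, ?_⟩
        · intro k' hk'
          rcases Nat.lt_or_ge k' (j+1) with h | h
          · calc r k' ≤ finrank K ↥(Wj ⊓ E k') := hc k' (by omega)
              _ ≤ finrank K ↥(W' ⊓ E k') :=
                Submodule.finrank_mono (inf_le_inf_right _ (le_sup_left.trans hS'W'))
          · have hk'e : k' = j+1 := by omega
            subst hk'e
            have heq : W' ⊓ E (j+1) = W' := inf_eq_left.2 (hW'F.trans inf_le_right)
            rw [heq, hW'dim]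
            exact le_max_right _ _
        · rcases le_or_gt (r (j+1))
            (finrank K ↥(Wj ⊔ (Submodule.map x (E (i+1)) ⊓ E (j+1)))) with h | h
          · refine ⟨k, by omega, ?_⟩
            rw [hW'dim, max_eq_left h]
            exact hSdim2
          · refine ⟨j+1, le_rfl, ?_⟩
            rw [hW'dim, max_eq_right h.le]
    obtain ⟨Wi, ha, hb, hc, k, hki, hdk⟩ := inner i le_rfl
    have hUeq : Submodule.map x (E (i+1)) ⊓ E i = Submodule.map x (E (i+1)) := inf_eq_left.2 hUE
    have hUWi : Submodule.map x (E (i+1)) ≤ Wi := hUeq ▸ ha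
    have hWiW : Wi ≤ W := hb.trans inf_le_left
    have hWiE : Wi ≤ E i := hb.trans inf_le_right
    have hdim : finrank K Wi = r i := by
      have h1 := hrowN k (i+1) (by omega) (by omega)
      rw [Nat.add_sub_cancel] at h1
      have h2 : finrank K ↥(Submodule.map x (E (i+1)) ⊓ E i)
          = finrank K ↥(Submodule.map x (E (i+1))) := by rw [hUeq]
      have h3 : r i ≤ finrank K ↥(Wi ⊓ E i) := hc i le_rfl
      have h4 : finrank K ↥(Wi ⊓ E i) ≤ finrank K Wi := Submodule.finrank_mono inf_le_left
      omega
    exact ⟨Wi, hWiW, hdim, hUWi, hWiE, hc⟩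
  -- outer downward recursion
  have outer : ∀ m, m ≤ l → ∃ Vc : ℕ → Submodule K V, Vc l = V' ∧
      (∀ i, l - m ≤ i → i ≤ l → finrank K (Vc i) = r i ∧
        Submodule.map x (E (i+1)) ≤ Vc i ∧ Vc i ≤ E i ∧
        ∀ j, j ≤ i → r j ≤ finrank K ↥(Vc i ⊓ E j)) ∧
      (∀ i, l - m ≤ i → i < l → Vc i ≤ Vc (i+1)) := by
    intro m
    induction m with
    | zero =>
      intro _
      refine ⟨fun _ => V', rfl, ?_, fun i h1 h2 => absurd h1 (by omega)⟩
      intro i h1 h2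
      have hi : i = l := by omega
      subst hi
      have h3 := hVE i le_rfl
      have h4 : V' ⊓ E i = V' := Submodule.eq_of_le_of_finrank_le inf_le_left (by omega)
      refine ⟨hV, ?_, inf_eq_left.1 h4, hVE⟩
      rw [hEtop, Submodule.map_top]
      exact hrange
    | succ m ih =>
      intro hm
      obtain ⟨Vc, hVcl, hInv, hChain⟩ := ih (by omega)
      have hi0 : l - (m+1) < l := by omega
      obtain ⟨hd, hx', hE', hint⟩ := hInv (l - (m+1) + 1) (by omega) (by omega)
      obtain ⟨W', hW'le, h1, h2, h3, h4⟩ := step (l - (m+1)) hi0 (Vc (l - (m+1) + 1)) hd hx' hE' hint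
      refine ⟨Function.update Vc (l - (m+1)) W', ?_, ?_, ?_⟩
      · rw [Function.update_of_ne (by omega : l ≠ l - (m+1))]
        exact hVcl
      · intro i hge hle'
        rcases eq_or_ne i (l - (m+1)) with rfl | hne
        · rw [Function.update_self]
          exact ⟨h1, h2, h3, h4⟩
        · rw [Function.update_of_ne hne]
          exact hInv i (by omega) hle'
      · intro i hge hlt
        rcases eq_or_ne i (l - (m+1)) with rfl | hne
        · rw [Function.update_self, Function.update_of_ne (by omega : l - (m+1) + 1 ≠ l - (m+1))]
          exact hW'le
        · rw [Function.update_of_ne hne, Function.update_of_ne (by omega : i + 1 ≠ l - (m+1))]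
          exact hChain i (by omega) hlt
  obtain ⟨Vc, hVcl, hInv, hChain⟩ := outer l le_rfl
  refine ⟨Vc, fun i hi => hChain i (by omega) hi, hVcl, ?_, ?_⟩
  · intro i hi
    obtain ⟨a, b, c, _⟩ := hInv i (by omega) hi
    exact ⟨a, b, c⟩
  · intro i j hj hi
    exact (hInv i (by omega) hi).2.2.2 j hj

end Aux


/-- Proposition rows: `x² = 0`, `0 = t_0 < t_1 < ⋯ < t_l <
t_{l+1} = n`, `0 = r_0 ≤ r_1 ≤ ⋯ ≤ r_l = d`, with the 'row' inequalities
`dim((x E(t_i) + E(t_j))/E(t_j)) ≤ r_{i−1} − r_j` for `0 ≤ j < i ≤ l+1`, and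
`V` a `d`-dimensional subspace with `im x ⊆ V ⊆ ker x` and
`dim(V ∩ E(t_j)) ≥ r_j` for all `j ≤ l`.  Then there is a chain
`V_0 ⊆ ⋯ ⊆ V_l = V` with `dim V_i = r_i`, `x E(t_{i+1}) ⊆ V_i ⊆ E(t_i)`, and
`dim(V_i ∩ E(t_j)) ≥ min(r_i, r_j)` for all `1 ≤ i, j ≤ l`. -/
theorem stmt19 {K : Type*} [Field K] {n l d : ℕ} (t r : ℕ → ℕ)
    (x : (Fin n → K) →ₗ[K] (Fin n → K)) (hx2 : x ∘ₗ x = 0)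
    (ht0 : t 0 = 0) (htn : t (l + 1) = n)
    (htmono : ∀ i j, i < j → j ≤ l + 1 → t i < t j)
    (hr0 : r 0 = 0) (hrl : r l = d)
    (hrmono : ∀ i j, i ≤ j → j ≤ l → r i ≤ r j)
    (hrow : ∀ j i, j < i → i ≤ l + 1 →
      (Module.finrank K ↥(Submodule.map (stdFlag K n (t j)).mkQ
          (Submodule.map x (stdFlag K n (t i)))) : ℤ)
        ≤ (r (i - 1) : ℤ) - (r j : ℤ))
    (V : Submodule K (Fin n → K)) (hV : Module.finrank K V = d)
    (hrange : LinearMap.range x ≤ V) (hker : V ≤ LinearMap.ker x)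
    (hVE : ∀ j, j ≤ l → r j ≤ Module.finrank K ↥(V ⊓ stdFlag K n (t j))) :
    ∃ Vc : ℕ → Submodule K (Fin n → K),
      (∀ i, i < l → Vc i ≤ Vc (i + 1)) ∧
      Vc l = V ∧
      (∀ i, i ≤ l → Module.finrank K (Vc i) = r i ∧
        Submodule.map x (stdFlag K n (t (i + 1))) ≤ Vc i ∧
        Vc i ≤ stdFlag K n (t i)) ∧
      (∀ i j, 1 ≤ i → i ≤ l → 1 ≤ j → j ≤ l →
        min (r i) (r j) ≤ Module.finrank K ↥(Vc i ⊓ stdFlag K n (t j))) := by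
  have htle : ∀ i j, i ≤ j → j ≤ l + 1 → t i ≤ t j := by
    intro i j hij hjl
    rcases Nat.lt_or_ge i j with h | h
    · exact (htmono i j h hjl).le
    · have hij' : i = j := by omega
      simp [hij']
  have hEmono : ∀ i j, i ≤ j → j ≤ l + 1 → stdFlag K n (t i) ≤ stdFlag K n (t j) := by
    intro i j hij hjl v hv k hk
    exact hv k ((htle i j hij hjl).trans hk)
  have hE0 : stdFlag K n (t 0) = ⊥ := by
    rw [eq_bot_iff]
    intro v hv
    rw [Submodule.mem_bot]
    funext k
    exact hv k (by omega)
  have hEtop : stdFlag K n (t (l + 1)) = ⊤ := by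
    rw [eq_top_iff]
    intro v _
    show ∀ k : Fin n, t (l + 1) ≤ (k : ℕ) → v k = 0
    intro k hk
    rw [htn] at hk
    exact absurd hk (not_le.mpr k.isLt)
  obtain ⟨Vc, hchain, hVl, hinv, hint⟩ := chain_aux l r (fun i => stdFlag K n (t i)) x
    hE0 hEtop hEmono hr0 hrow V (by rw [hV, hrl]) hrange hVE
  refine ⟨Vc, hchain, hVl, fun i hi => hinv i hi, ?_⟩
  intro i j h1i hil h1j hjl
  rcases Nat.le_total j i with h | h
  · exact le_trans (min_le_right _ _) (hint i j h hil)
  · have hil' : i ≤ l := le_trans h hjl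
    have hVcE : Vc i ≤ stdFlag K n (t j) :=
      le_trans (hinv i hil').2.2 (hEmono i j h (by omega))
    have heq : Vc i ⊓ stdFlag K n (t j) = Vc i := inf_eq_left.2 hVcE
    rw [heq, (hinv i hil').1]
    exact min_le_left _ _
end
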